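/- arXiv:1610.02634 — 3 statements merged into one kernel-verified Lean document; each statement's English description precedes it below -/
import Mathlib

section
/- The poset of all maximum-sized antichains of a finite poset X, ordered by α ≤ β iff every element of α is below some element of β, is a distributive lattice. -/
/-- The type of maximum-sized antichains of a finite poset `X`. -/
def MaxSizeAC (X : Type) [Fintype X] [PartialOrder X] [DecidableEq X] :=
  {a : Finset X // IsAntichain (· ≤ ·) (↑a : Set X) ∧
      ∀ b : Finset X, IsAntichain (· ≤ ·) (↑b : Set X) → b.card ≤ a.card}

section Aux

variable {X : Type} [Fintype X] [PartialOrder X] [DecidableEq X]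

open Classical in
/-- Downset generated by a finset. -/
noncomputable def dset (a : Finset X) : Finset X :=
  Finset.univ.filter (fun x => ∃ y ∈ a, x ≤ y)

open Classical in
lemma mem_dset {a : Finset X} {x : X} : x ∈ dset a ↔ ∃ y ∈ a, x ≤ y := by
  simp [dset]

open Classical in
/-- Maximal elements of a finset. -/
noncomputable def maxS (s : Finset X) : Finset X :=
  s.filter (fun x => ∀ y ∈ s, ¬ x < y)

open Classical in
/-- Minimal elements of a finset. -/
noncomputable def minS (s : Finset X) : Finset X :=
  s.filter (fun x => ∀ y ∈ s, ¬ y < x)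

open Classical in
lemma mem_maxS {s : Finset X} {x : X} : x ∈ maxS s ↔ x ∈ s ∧ ∀ y ∈ s, ¬ x < y := by
  simp [maxS]

open Classical in
lemma mem_minS {s : Finset X} {x : X} : x ∈ minS s ↔ x ∈ s ∧ ∀ y ∈ s, ¬ y < x := by
  simp [minS]

lemma antichain_maxS (s : Finset X) : IsAntichain (· ≤ ·) (↑(maxS s) : Set X) := by
  intro x hx y hy hne hle
  rw [Finset.mem_coe, mem_maxS] at hx hy
  exact hx.2 y hy.1 (lt_of_le_of_ne hle hne)

lemma antichain_minS (s : Finset X) : IsAntichain (· ≤ ·) (↑(minS s) : Set X) := by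
  intro x hx y hy hne hle
  rw [Finset.mem_coe, mem_minS] at hx hy
  exact hy.2 x hx.1 (lt_of_le_of_ne hle hne)

lemma exists_maximal_ge {s : Finset X} {a : X} (ha : a ∈ s) : ∃ z ∈ maxS s, a ≤ z := by
  classical
  obtain ⟨m, hm, hmax⟩ := (s.filter (fun y => a ≤ y)).exists_maximal
    ⟨a, Finset.mem_filter.2 ⟨ha, le_refl a⟩⟩
  rw [Finset.mem_filter] at hm
  refine ⟨m, mem_maxS.2 ⟨hm.1, fun y hy hlt => ?_⟩, hm.2⟩
  exact hlt.ne (le_antisymm hlt.le (hmax (Finset.mem_filter.2 ⟨hy, hm.2.trans hlt.le⟩) hlt.le))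

lemma exists_minimal_le {s : Finset X} {a : X} (ha : a ∈ s) : ∃ z ∈ minS s, z ≤ a := by
  classical
  obtain ⟨m, hm, hmin⟩ := (s.filter (fun y => y ≤ a)).exists_minimal
    ⟨a, Finset.mem_filter.2 ⟨ha, le_refl a⟩⟩
  rw [Finset.mem_filter] at hm
  refine ⟨m, mem_minS.2 ⟨hm.1, fun y hy hlt => ?_⟩, hm.2⟩
  exact hlt.ne (le_antisymm hlt.le (hmin (Finset.mem_filter.2 ⟨hy, hlt.le.trans hm.2⟩) hlt.le))

/-- Every element of the union of two antichains is maximal or minimal in the union. -/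
lemma union_eq_max_union_min {a b : Finset X}
    (ha : IsAntichain (· ≤ ·) (↑a : Set X)) (hb : IsAntichain (· ≤ ·) (↑b : Set X)) :
    maxS (a ∪ b) ∪ minS (a ∪ b) = a ∪ b := by
  apply Finset.Subset.antisymm
  · intro x hx
    rcases Finset.mem_union.1 hx with h | h
    · exact (mem_maxS.1 h).1
    · exact (mem_minS.1 h).1
  · intro x hx
    by_contra hcon
    rw [Finset.mem_union, mem_maxS, mem_minS] at hcon
    push_neg at hcon
    obtain ⟨y, hy, hxy⟩ := (hcon.1 hx)
    obtain ⟨z, hz, hzx⟩ := (hcon.2 hx)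
    -- z < x < y, so z < y; both z,y must be in opposite antichain from x, contradiction
    have hzy : z < y := hzx.trans hxy
    rcases Finset.mem_union.1 hx with hxa | hxb
    · have hya : y ∈ b := by
        rcases Finset.mem_union.1 hy with h | h
        · exact absurd hxy.le (ha hxa h (fun e => hxy.ne e))
        · exact h
      have hza : z ∈ b := by
        rcases Finset.mem_union.1 hz with h | h
        · exact absurd hzx.le (ha h hxa (fun e => hzx.ne e))
        · exact h
      exact hb hza hya hzy.ne hzy.le
    · have hya : y ∈ a := by
        rcases Finset.mem_union.1 hy with h | h
        · exact h
        · exact absurd hxy.le (hb hxb h (fun e => hxy.ne e))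
      have hza : z ∈ a := by
        rcases Finset.mem_union.1 hz with h | h
        · exact h
        · exact absurd hzx.le (hb h hxb (fun e => hzx.ne e))
      exact ha hza hya hzy.ne hzy.le

lemma inter_subset_max_inter_min {a b : Finset X}
    (ha : IsAntichain (· ≤ ·) (↑a : Set X)) (hb : IsAntichain (· ≤ ·) (↑b : Set X)) :
    a ∩ b ⊆ maxS (a ∪ b) ∩ minS (a ∪ b) := by
  intro x hx
  rw [Finset.mem_inter] at hx
  have hxu : x ∈ a ∪ b := Finset.mem_union.2 (Or.inl hx.1)
  refine Finset.mem_inter.2 ⟨mem_maxS.2 ⟨hxu, fun y hy hlt => ?_⟩,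
    mem_minS.2 ⟨hxu, fun y hy hlt => ?_⟩⟩
  · rcases Finset.mem_union.1 hy with h | h
    · exact ha hx.1 h hlt.ne hlt.le
    · exact hb hx.2 h hlt.ne hlt.le
  · rcases Finset.mem_union.1 hy with h | h
    · exact ha h hx.1 hlt.ne hlt.le
    · exact hb h hx.2 hlt.ne hlt.le

lemma card_max_min (α β : MaxSizeAC X) :
    (maxS (α.1 ∪ β.1)).card = α.1.card ∧ (minS (α.1 ∪ β.1)).card = α.1.card := by
  classical
  have ha := α.2.1
  have hb := β.2.1
  have hcards : β.1.card = α.1.card :=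
    le_antisymm (α.2.2 β.1 hb) (β.2.2 α.1 ha)
  have h1 : (maxS (α.1 ∪ β.1) ∪ minS (α.1 ∪ β.1)).card +
      (maxS (α.1 ∪ β.1) ∩ minS (α.1 ∪ β.1)).card =
      (maxS (α.1 ∪ β.1)).card + (minS (α.1 ∪ β.1)).card :=
    Finset.card_union_add_card_inter _ _
  rw [union_eq_max_union_min ha hb] at h1
  have h2 : (α.1 ∩ β.1).card ≤ (maxS (α.1 ∪ β.1) ∩ minS (α.1 ∪ β.1)).card :=
    Finset.card_le_card (inter_subset_max_inter_min ha hb)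
  have h3 : (α.1 ∪ β.1).card + (α.1 ∩ β.1).card = α.1.card + β.1.card :=
    Finset.card_union_add_card_inter _ _
  have h4 : (maxS (α.1 ∪ β.1)).card ≤ α.1.card := α.2.2 _ (antichain_maxS _)
  have h5 : (minS (α.1 ∪ β.1)).card ≤ α.1.card := α.2.2 _ (antichain_minS _)
  omega

/-- Join of two maximum antichains. -/
noncomputable def acSup (α β : MaxSizeAC X) : MaxSizeAC X :=
  ⟨maxS (α.1 ∪ β.1), antichain_maxS _, fun b hb => by
    rw [(card_max_min α β).1]; exact α.2.2 b hb⟩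

/-- Meet of two maximum antichains. -/
noncomputable def acInf (α β : MaxSizeAC X) : MaxSizeAC X :=
  ⟨minS (α.1 ∪ β.1), antichain_minS _, fun b hb => by
    rw [(card_max_min α β).2]; exact α.2.2 b hb⟩

/-- Every element of X is comparable with some element of a maximum antichain. -/
lemma comp_max_antichain (α : MaxSizeAC X) (x : X) :
    ∃ a ∈ α.1, x ≤ a ∨ a ≤ x := by
  classical
  by_contra hcon
  push_neg at hcon
  have hx : x ∉ α.1 := fun h => (hcon x h).1 le_rfl
  have hins : IsAntichain (· ≤ ·) (↑(insert x α.1) : Set X) := by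
    rw [Finset.coe_insert]
    refine α.2.1.insert (fun b hb hne hba => ?_) (fun b hb hne hab => ?_)
    · exact (hcon b hb).2 hba
    · exact (hcon b hb).1 hab
  have := α.2.2 _ hins
  rw [Finset.card_insert_of_notMem hx] at this
  omega

lemma dset_union (a b : Finset X) : dset (a ∪ b) = dset a ∪ dset b := by
  ext x
  simp only [mem_dset, Finset.mem_union]
  aesop

lemma dset_maxS (s : Finset X) : dset (maxS s) = dset s := by
  ext x
  simp only [mem_dset]
  constructor
  · rintro ⟨y, hy, hxy⟩
    exact ⟨y, (mem_maxS.1 hy).1, hxy⟩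
  · rintro ⟨y, hy, hxy⟩
    obtain ⟨z, hz, hyz⟩ := exists_maximal_ge hy
    exact ⟨z, hz, hxy.trans hyz⟩

/-- dset of the join is the union of dsets. -/
lemma dset_acSup (α β : MaxSizeAC X) :
    dset (acSup α β).1 = dset α.1 ∪ dset β.1 := by
  show dset (maxS (α.1 ∪ β.1)) = _
  rw [dset_maxS, dset_union]

/-- dset of the meet is the intersection of dsets. -/
lemma dset_acInf (α β : MaxSizeAC X) :
    dset (acInf α β).1 = dset α.1 ∩ dset β.1 := by
  have ha := α.2.1
  have hb := β.2.1
  ext x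
  simp only [Finset.mem_inter, mem_dset]
  constructor
  · rintro ⟨c, hc, hxc⟩
    have hc' := mem_minS.1 hc
    have hca : ∀ γ : MaxSizeAC X, c ∈ γ.1 ∨ c ∉ γ.1 := fun _ => em _
    constructor
    · -- x ≤ some element of α
      rcases Finset.mem_union.1 hc'.1 with h | h
      · exact ⟨c, h, hxc⟩
      · -- c ∈ β; c comparable to some a ∈ α
        obtain ⟨a, haa, hcomp⟩ := comp_max_antichain α c
        rcases hcomp with hle | hge
        · exact ⟨a, haa, hxc.trans hle⟩
        · rcases eq_or_lt_of_le hge with heq | hlt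
          · exact ⟨a, haa, heq ▸ hxc⟩
          · exact absurd hlt (hc'.2 a (Finset.mem_union.2 (Or.inl haa)))
    · rcases Finset.mem_union.1 hc'.1 with h | h
      · obtain ⟨b, hbb, hcomp⟩ := comp_max_antichain β c
        rcases hcomp with hle | hge
        · exact ⟨b, hbb, hxc.trans hle⟩
        · rcases eq_or_lt_of_le hge with heq | hlt
          · exact ⟨b, hbb, heq ▸ hxc⟩
          · exact absurd hlt (hc'.2 b (Finset.mem_union.2 (Or.inr hbb)))
      · exact ⟨c, h, hxc⟩
  · rintro ⟨⟨a, haa, hxa⟩, ⟨b, hbb, hxb⟩⟩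
    -- x is comparable to some element c of the meet (a maximum antichain)
    obtain ⟨c, hc, hcomp⟩ := comp_max_antichain (acInf α β) x
    rcases hcomp with hle | hge
    · exact ⟨c, hc, hle⟩
    · -- c ≤ x; derive x ≤ c hence equality case
      have hc' := mem_minS.1 hc
      rcases Finset.mem_union.1 hc'.1 with h | h
      · -- c ∈ α, c ≤ x ≤ a, both in α
        have hca : c ≤ a := hge.trans hxa
        have : c = a := by
          by_contra hne
          exact ha h haa hne hca
        subst this
        have : x = c := le_antisymm hxa hge
        exact ⟨c, hc, this.le⟩
      · have hcb : c ≤ b := hge.trans hxb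
        have : c = b := by
          by_contra hne
          exact hb h hbb hne hcb
        subst this
        have : x = c := le_antisymm hxb hge
        exact ⟨c, hc, this.le⟩

/-- dset is injective on antichains. -/
lemma antichain_subset_of_dset_subset {a b : Finset X}
    (ha : IsAntichain (· ≤ ·) (↑a : Set X))
    (h : dset a = dset b) : a ⊆ b := by
  intro x hx
  have hx1 : x ∈ dset b := h ▸ mem_dset.2 ⟨x, hx, le_rfl⟩
  obtain ⟨y, hy, hxy⟩ := mem_dset.1 hx1
  have hy1 : y ∈ dset a := h.symm ▸ mem_dset.2 ⟨y, hy, le_rfl⟩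
  obtain ⟨z, hz, hyz⟩ := mem_dset.1 hy1
  have hxz : x ≤ z := hxy.trans hyz
  have hxze : x = z := by
    by_contra hne
    exact ha hx hz hne hxz
  subst hxze
  have : x = y := le_antisymm hxy hyz
  exact this ▸ hy

lemma le_iff_dset {α β : MaxSizeAC X} :
    (∀ x ∈ α.1, ∃ y ∈ β.1, x ≤ y) ↔ dset α.1 ⊆ dset β.1 := by
  constructor
  · intro h x hx
    obtain ⟨y, hy, hxy⟩ := mem_dset.1 hx
    obtain ⟨z, hz, hyz⟩ := h y hy
    exact mem_dset.2 ⟨z, hz, hxy.trans hyz⟩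
  · intro h x hx
    exact mem_dset.1 (h (mem_dset.2 ⟨x, hx, le_rfl⟩))

end Aux

/-- The poset of all maximum-sized antichains of a finite poset X, ordered by
α ≤ β iff every element of α is below some element of β, is a distributive lattice. -/
theorem stmt1 {X : Type} [Fintype X] [PartialOrder X] [DecidableEq X] :
    ∃ inst : DistribLattice (MaxSizeAC X),
      ∀ α β : MaxSizeAC X,
        (@LE.le _ (@Preorder.toLE _ (@PartialOrder.toPreorder _
          (@SemilatticeInf.toPartialOrder _ (@Lattice.toSemilatticeInf _
            (@DistribLattice.toLattice _ inst))))) α β) ↔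
        (∀ x ∈ α.1, ∃ y ∈ β.1, x ≤ y) := by
  classical
  have hle : ∀ α β : MaxSizeAC X,
      (∀ x ∈ α.1, ∃ y ∈ β.1, x ≤ y) ↔ dset α.1 ⊆ dset β.1 := fun _ _ => le_iff_dset
  refine ⟨{
    le := fun α β => ∀ x ∈ α.1, ∃ y ∈ β.1, x ≤ y
    sup := acSup
    inf := acInf
    le_refl := fun α x hx => ⟨x, hx, le_rfl⟩
    le_trans := fun α β γ hab hbc =>
      (hle α γ).2 (((hle α β).1 hab).trans ((hle β γ).1 hbc))
    le_antisymm := fun α β hab hba => by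
      have h : dset α.1 = dset β.1 :=
        Finset.Subset.antisymm ((hle α β).1 hab) ((hle β α).1 hba)
      exact Subtype.ext (Finset.Subset.antisymm
        (antichain_subset_of_dset_subset α.2.1 h)
        (antichain_subset_of_dset_subset β.2.1 h.symm))
    le_sup_left := fun α β => (hle α (acSup α β)).2
      (by rw [dset_acSup]; exact Finset.subset_union_left)
    le_sup_right := fun α β => (hle β (acSup α β)).2
      (by rw [dset_acSup]; exact Finset.subset_union_right)
    sup_le := fun α β γ hab hbc => (hle (acSup α β) γ).2
      (by rw [dset_acSup]
          exact Finset.union_subset ((hle α γ).1 hab) ((hle β γ).1 hbc))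
    inf_le_left := fun α β => (hle (acInf α β) α).2
      (by rw [dset_acInf]; exact Finset.inter_subset_left)
    inf_le_right := fun α β => (hle (acInf α β) β).2
      (by rw [dset_acInf]; exact Finset.inter_subset_right)
    le_inf := fun α β γ hab hac => (hle α (acInf β γ)).2
      (by rw [dset_acInf]
          exact Finset.subset_inter ((hle α β).1 hab) ((hle α γ).1 hac))
    le_sup_inf := fun α β γ => (hle (acInf (acSup α β) (acSup α γ)) (acSup α (acInf β γ))).2
      (by rw [dset_acInf, dset_acSup, dset_acSup, dset_acSup, dset_acInf]
          intro x hx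
          rw [Finset.mem_inter, Finset.mem_union, Finset.mem_union] at hx
          rw [Finset.mem_union, Finset.mem_inter]
          tauto)
  }, fun α β => Iff.rfl⟩
end

section
/- Let τ ⊆ ternary term functions of an algebra 𝕊, v a unary term function, e ∈ S, K ⊆ S, and let Θ_{K,e} = {(a,b) : ∀ t ∈ τ, t(a,b,e) ∈ K}. If Θ_{K,e} is reflexive and transitive and K = {b : (v(e), b) ∈ Θ_{K,e}}, then K is a (v,e)-τ-deductive system of 𝕊. -/
/-- If Θ_{K,e} = {(a,b) : ∀ t ∈ τ, t(a,b,e) ∈ K} is reflexive and transitive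
and K = {b : (v(e), b) ∈ Θ_{K,e}}, then K is a (v,e)-τ-deductive system: v(e) ∈ K;
a ∈ K and t(a,b,e) ∈ K (for all t ∈ τ) imply b ∈ K; b ∈ K implies t(v(e),b,e) ∈ K. -/
theorem stmt5 {S : Type} (v : S → S) (e : S) (τ : Set (S → S → S → S)) (K : Set S)
    (hrefl : ∀ a : S, ∀ t ∈ τ, t a a e ∈ K)
    (htrans : ∀ a b c : S, (∀ t ∈ τ, t a b e ∈ K) → (∀ t ∈ τ, t b c e ∈ K) →
      (∀ t ∈ τ, t a c e ∈ K))
    (hK : K = {b : S | ∀ t ∈ τ, t (v e) b e ∈ K}) :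
    v e ∈ K ∧
    (∀ a b : S, a ∈ K → (∀ t ∈ τ, t a b e ∈ K) → b ∈ K) ∧
    (∀ t ∈ τ, ∀ b : S, b ∈ K → t (v e) b e ∈ K) := by
  have hmem : ∀ b : S, b ∈ K ↔ ∀ t ∈ τ, t (v e) b e ∈ K := Set.ext_iff.mp hK
  refine ⟨(hmem (v e)).2 (fun t ht => hrefl (v e) t ht), ?_, ?_⟩
  · intro a b ha hab
    exact (hmem b).2 (htrans (v e) a b ((hmem a).1 ha) hab)
  · intro t ht b hb
    exact (hmem b).1 hb t ht
end

section
/- In a finite distributive lattice, the length of the lattice equals the number of join-irreducible elements, which also equals the number of meet-irreducible elements. -/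
open OrderDual

private lemma dualChain {α : Type} [Preorder α] {c : List α} (h : c.Chain' (· < ·)) :
    (c.reverse.map (OrderDual.toDual : α → αᵒᵈ)).Chain' (· < ·) := by
  show List.IsChain _ _
  rw [List.isChain_map, List.isChain_reverse]
  exact List.IsChain.imp (fun a b hab => hab) h

private lemma key {α : Type} [Fintype α] [DistribLattice α] [OrderBot α] :
    IsGreatest {m : ℕ | ∃ c : List α, c.Chain' (· < ·) ∧ c.length = m + 1}
      (Nat.card {x : α // SupIrred x}) := by
  classical
  set J := {x : α // SupIrred x} with hJ
  let e : α ≃o LowerSet J := OrderIso.lowerSetSupIrred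
  set n := Nat.card J with hn
  have hcardJ : Fintype.card J = n := Nat.card_eq_fintype_card.symm
  letI : Fintype (LinearExtension J) := (inferInstance : Fintype J)
  have hcardJ' : Fintype.card (LinearExtension J) = n := hcardJ
  let g : Fin n ≃o LinearExtension J := monoEquivOfFin _ hcardJ'
  let idx : J → ℕ := fun j => (g.symm (toLinearExtension j) : Fin n).val
  have hidx_mono : ∀ {j j' : J}, j' ≤ j → idx j' ≤ idx j := by
    intro j j' h
    exact g.symm.monotone (toLinearExtension.monotone h)
  let S : ℕ → LowerSet J := fun k =>
    ⟨{j | idx j < k}, fun j j' h hj => lt_of_le_of_lt (hidx_mono h) hj⟩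
  have hidxg : ∀ (k : ℕ) (hk : k < n), idx (g ⟨k, hk⟩ : J) = k := by
    intro k hk
    show (g.symm (g ⟨k, hk⟩) : Fin n).val = k
    rw [g.symm_apply_apply]
  have hSlt : ∀ k < n, S k < S (k + 1) := by
    intro k hk
    have hle : S k ≤ S (k + 1) := fun j hj => lt_trans hj (Nat.lt_succ_self _)
    refine lt_of_le_of_ne hle fun hEq => ?_
    have hj : (g ⟨k, hk⟩ : J) ∈ S (k + 1) := by
      show idx (g ⟨k, hk⟩ : J) < k + 1
      rw [hidxg k hk]; omega
    rw [← hEq] at hj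
    have hj' : idx (g ⟨k, hk⟩ : J) < k := hj
    rw [hidxg k hk] at hj'
    omega
  constructor
  · refine ⟨(List.range (n + 1)).map fun k => e.symm (S k), ?_, by simp⟩
    show List.IsChain _ _
    rw [List.isChain_map, List.isChain_range_succ]
    intro m hm
    exact e.symm.strictMono (hSlt m hm)
  · rintro m ⟨c, hc, hlen⟩
    let f : α → ℕ := fun x => ((e x : Set J)).toFinset.card
    have hf : StrictMono f := by
      intro x y hxy
      have h1 : e x < e y := e.strictMono hxy
      have h2 : (e x : Set J) ⊂ (e y : Set J) := h1
      exact Finset.card_lt_card (Set.toFinset_ssubset_toFinset.2 h2)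
    have hl : (c.map f).Chain' (· < ·) := List.isChain_map_of_isChain f (fun a b h => hf h) hc
    have hnd : (c.map f).Nodup := (List.isChain_iff_pairwise.1 hl).imp ne_of_lt
    have hsub : (c.map f).toFinset ⊆ Finset.range (n + 1) := by
      intro a ha
      rw [List.mem_toFinset, List.mem_map] at ha
      obtain ⟨x, _, rfl⟩ := ha
      rw [Finset.mem_range]
      have : f x ≤ n := hcardJ ▸ Finset.card_le_univ _
      omega
    have : (c.map f).length ≤ n + 1 := by
      calc (c.map f).length = (c.map f).toFinset.card := (List.toFinset_card_of_nodup hnd).symm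
        _ ≤ (Finset.range (n + 1)).card := Finset.card_le_card hsub
        _ = n + 1 := Finset.card_range _
    rw [List.length_map, hlen] at this
    omega


/-- In a finite distributive lattice, the length of the lattice (the number
of covering steps in a longest chain, i.e. one less than the largest cardinality of a
chain) equals the number of join-irreducible elements, which also equals the number of
meet-irreducible elements. -/
theorem stmt14 {L : Type} [Fintype L] [DistribLattice L] [BoundedOrder L] :
    Nat.card {x : L // SupIrred x} = Nat.card {x : L // InfIrred x} ∧
    IsGreatest {m : ℕ | ∃ c : List L, c.Chain' (· < ·) ∧ c.length = m + 1}
      (Nat.card {x : L // SupIrred x}) := by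
  have h1 := key (α := L)
  have h2 := key (α := Lᵒᵈ)
  have hsets : {m : ℕ | ∃ c : List Lᵒᵈ, c.Chain' (· < ·) ∧ c.length = m + 1}
      = {m : ℕ | ∃ c : List L, c.Chain' (· < ·) ∧ c.length = m + 1} := by
    ext m
    constructor
    · rintro ⟨c, hc, hlen⟩
      exact ⟨c.reverse.map OrderDual.toDual, dualChain hc, (List.length_map _).trans (List.length_reverse.trans hlen)⟩
    · rintro ⟨c, hc, hlen⟩
      exact ⟨c.reverse.map OrderDual.toDual, dualChain hc, (List.length_map _).trans (List.length_reverse.trans hlen)⟩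
  rw [hsets] at h2
  have hcard : Nat.card {x : Lᵒᵈ // SupIrred x} = Nat.card {x : L // InfIrred x} :=
    Nat.card_congr (Equiv.subtypeEquiv (OrderDual.ofDual) fun x => by
      simp [supIrred_ofDual])
  rw [hcard] at h2
  exact ⟨h2.unique h1 ▸ rfl, h1⟩
end
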